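/- (The rotation map Φ₃ is the exact flow of the binding Hamiltonian.) Let n ≥ 1, ω ∈ ℝ, and let q₀, p₀, x₀, y₀ ∈ ℝⁿ. Define curves q, p, x, y : ℝ → ℝⁿ by q(t) = ½[(q₀+x₀) + cos(2tω)(q₀−x₀) + sin(2tω)(p₀−y₀)], p(t) = ½[(p₀+y₀) − sin(2tω)(q₀−x₀) + cos(2tω)(p₀−y₀)], x(t) = ½[(q₀+x₀) − cos(2tω)(q₀−x₀) − sin(2tω)(p₀−y₀)], y(t) = ½[(p₀+y₀) + sin(2tω)(q₀−x₀) − cos(2tω)(p₀−y₀)]. Then (q(0), p(0), x(0), y(0)) = (q₀, p₀, x₀, y₀) and for all t: q'(t) = ω(p(t) − y(t)), p'(t) = −ω(q(t) − x(t)), x'(t) = ω(y(t) − p(t)), and y'(t) = −ω(x(t) − q(t)). -/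

import Mathlib

lemma aux_sin (ω t : ℝ) : HasDerivAt (fun t : ℝ => Real.sin (2 * t * ω))
    (Real.cos (2 * t * ω) * (2 * ω)) t := by
  have h : HasDerivAt (fun t : ℝ => 2 * t * ω) (2 * ω) t := by
    simpa using ((hasDerivAt_id t).const_mul 2).mul_const ω
  exact (Real.hasDerivAt_sin (2 * t * ω)).comp t h

lemma aux_cos (ω t : ℝ) : HasDerivAt (fun t : ℝ => Real.cos (2 * t * ω))
    (-Real.sin (2 * t * ω) * (2 * ω)) t := by
  have h : HasDerivAt (fun t : ℝ => 2 * t * ω) (2 * ω) t := by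
    simpa using ((hasDerivAt_id t).const_mul 2).mul_const ω
  exact (Real.hasDerivAt_cos (2 * t * ω)).comp t h

/-- The rotation map `Φ₃` of the explicit integrator is the exact flow of the
binding Hamiltonian `H_b(q,p,x,y) = (ω/2)(‖q−x‖² + ‖p−y‖²)`: the explicitly
given rotating curves start at `(q₀, p₀, x₀, y₀)` and satisfy
`q' = ω(p−y)`, `p' = −ω(q−x)`, `x' = ω(y−p)`, `y' = −ω(x−q)`. -/
theorem stmt15 (n : ℕ) (hn : 1 ≤ n) (ω : ℝ)
    (q₀ p₀ x₀ y₀ : Fin n → ℝ)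
    (q p x y : ℝ → (Fin n → ℝ))
    (hq : q = fun t => (2⁻¹ : ℝ) •
      ((q₀ + x₀) + Real.cos (2 * t * ω) • (q₀ - x₀) + Real.sin (2 * t * ω) • (p₀ - y₀)))
    (hp : p = fun t => (2⁻¹ : ℝ) •
      ((p₀ + y₀) - Real.sin (2 * t * ω) • (q₀ - x₀) + Real.cos (2 * t * ω) • (p₀ - y₀)))
    (hx : x = fun t => (2⁻¹ : ℝ) •
      ((q₀ + x₀) - Real.cos (2 * t * ω) • (q₀ - x₀) - Real.sin (2 * t * ω) • (p₀ - y₀)))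
    (hy : y = fun t => (2⁻¹ : ℝ) •
      ((p₀ + y₀) + Real.sin (2 * t * ω) • (q₀ - x₀) - Real.cos (2 * t * ω) • (p₀ - y₀))) :
    (q 0 = q₀ ∧ p 0 = p₀ ∧ x 0 = x₀ ∧ y 0 = y₀) ∧
    ∀ t : ℝ,
      deriv q t = ω • (p t - y t) ∧
      deriv p t = -(ω • (q t - x t)) ∧
      deriv x t = ω • (y t - p t) ∧
      deriv y t = -(ω • (x t - q t)) := by
  subst hq hp hx hy
  constructor
  · refine ⟨?_, ?_, ?_, ?_⟩ <;> · simp; module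
  · intro t
    set s := Real.sin (2 * t * ω) with hs
    set c := Real.cos (2 * t * ω) with hc
    have hS : HasDerivAt (fun t : ℝ => Real.sin (2 * t * ω)) (c * (2 * ω)) t := aux_sin ω t
    have hC : HasDerivAt (fun t : ℝ => Real.cos (2 * t * ω)) (-s * (2 * ω)) t := aux_cos ω t
    have hq' : HasDerivAt (fun t => (2⁻¹ : ℝ) •
        ((q₀ + x₀) + Real.cos (2 * t * ω) • (q₀ - x₀) + Real.sin (2 * t * ω) • (p₀ - y₀)))
        ((2⁻¹ : ℝ) • ((0 : Fin n → ℝ) + (-s * (2 * ω)) • (q₀ - x₀) + (c * (2 * ω)) • (p₀ - y₀))) t :=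
      (((hasDerivAt_const t (q₀ + x₀)).add (hC.smul_const (q₀ - x₀))).add
        (hS.smul_const (p₀ - y₀))).const_smul (2⁻¹ : ℝ)
    have hp' : HasDerivAt (fun t => (2⁻¹ : ℝ) •
        ((p₀ + y₀) - Real.sin (2 * t * ω) • (q₀ - x₀) + Real.cos (2 * t * ω) • (p₀ - y₀)))
        ((2⁻¹ : ℝ) • ((0 : Fin n → ℝ) - (c * (2 * ω)) • (q₀ - x₀) + (-s * (2 * ω)) • (p₀ - y₀))) t :=
      (((hasDerivAt_const t (p₀ + y₀)).sub (hS.smul_const (q₀ - x₀))).add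
        (hC.smul_const (p₀ - y₀))).const_smul (2⁻¹ : ℝ)
    have hx' : HasDerivAt (fun t => (2⁻¹ : ℝ) •
        ((q₀ + x₀) - Real.cos (2 * t * ω) • (q₀ - x₀) - Real.sin (2 * t * ω) • (p₀ - y₀)))
        ((2⁻¹ : ℝ) • ((0 : Fin n → ℝ) - (-s * (2 * ω)) • (q₀ - x₀) - (c * (2 * ω)) • (p₀ - y₀))) t :=
      (((hasDerivAt_const t (q₀ + x₀)).sub (hC.smul_const (q₀ - x₀))).sub
        (hS.smul_const (p₀ - y₀))).const_smul (2⁻¹ : ℝ)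
    have hy' : HasDerivAt (fun t => (2⁻¹ : ℝ) •
        ((p₀ + y₀) + Real.sin (2 * t * ω) • (q₀ - x₀) - Real.cos (2 * t * ω) • (p₀ - y₀)))
        ((2⁻¹ : ℝ) • ((0 : Fin n → ℝ) + (c * (2 * ω)) • (q₀ - x₀) - (-s * (2 * ω)) • (p₀ - y₀))) t :=
      (((hasDerivAt_const t (p₀ + y₀)).add (hS.smul_const (q₀ - x₀))).sub
        (hC.smul_const (p₀ - y₀))).const_smul (2⁻¹ : ℝ)
    refine ⟨?_, ?_, ?_, ?_⟩
    · rw [hq'.deriv]; simp only [← hs, ← hc]; module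
    · rw [hp'.deriv]; simp only [← hs, ← hc]; module
    · rw [hx'.deriv]; simp only [← hs, ← hc]; module
    · rw [hy'.deriv]; simp only [← hs, ← hc]; module
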